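/- Let x, y ∈ [0,1), m a positive integer, and v = x + y·φ^{-m}. Suppose there exists λ ≥ 1 with λ + 2 ≤ m and δ_λ(x) = δ_{λ+1}(x) = 0, where δ_i denotes the base-φ digits. Define w = ∑_{i=λ+2}^∞ δ_i(x)·φ^{-i} + ∑_{i=m+1}^∞ δ_{i-m}(y)·φ^{-i}. Then v, w ∈ [0,1), w < φ^{-λ}, and the base-φ digits of v satisfy δ_i(v) = δ_i(x) for i ≤ λ and δ_i(v) = δ_i(w) for i > λ. -/

import Mathlib

open Real goldenRatio

/-- The map `T x = φ x mod 1` of the base-`φ` expansion. -/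
noncomputable def phiMap (y : ℝ) : ℝ := Int.fract (goldenRatio * y)

/-- The `i`-th digit (for `i ≥ 1`) of the base-`φ` expansion of `x ∈ [0,1)`. -/
noncomputable def phiDigit (x : ℝ) (i : ℕ) : ℤ :=
  ⌊goldenRatio * (phiMap^[i - 1] x)⌋


lemma gi_pos : (0:ℝ) < φ⁻¹ := inv_pos.2 goldenRatio_pos
lemma gi_lt_one : φ⁻¹ < 1 := inv_lt_one_of_one_lt₀ one_lt_goldenRatio
lemma gold_mul_gi : φ * φ⁻¹ = 1 := mul_inv_cancel₀ goldenRatio_ne_zero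
lemma gi_eq : φ⁻¹ = φ - 1 :=
  inv_eq_of_mul_eq_one_right (by linear_combination goldenRatio_sq)
lemma gi_add_sq : φ⁻¹ + φ⁻¹ ^ 2 = 1 := by
  rw [gi_eq]; linear_combination goldenRatio_sq

lemma phiMap_mem (t : ℝ) : phiMap t ∈ Set.Ico (0:ℝ) 1 :=
  ⟨Int.fract_nonneg _, Int.fract_lt_one _⟩

lemma iter_mem {t : ℝ} (ht : t ∈ Set.Ico (0:ℝ) 1) (k : ℕ) :
    phiMap^[k] t ∈ Set.Ico (0:ℝ) 1 := by
  induction k with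
  | zero => exact ht
  | succ k ih => rw [Function.iterate_succ_apply']; exact phiMap_mem _

lemma iter_succ (t : ℝ) (n : ℕ) :
    phiMap^[n+1] t = φ * phiMap^[n] t - phiDigit t (n+1) := by
  rw [Function.iterate_succ_apply']
  show Int.fract (φ * phiMap^[n] t) = φ * phiMap^[n] t - (⌊φ * (phiMap^[n+1-1] t)⌋ : ℤ)
  rw [Int.fract]
  norm_num

lemma digit_nonneg {t : ℝ} (ht : t ∈ Set.Ico (0:ℝ) 1) (i : ℕ) : 0 ≤ phiDigit t i :=
  Int.floor_nonneg.2 (mul_nonneg goldenRatio_pos.le (iter_mem ht _).1)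

lemma digit_le_one {t : ℝ} (ht : t ∈ Set.Ico (0:ℝ) 1) (i : ℕ) : phiDigit t i ≤ 1 := by
  have h2 : φ * phiMap^[i-1] t < 2 := by
    have := (iter_mem ht (i-1)).2
    have := (iter_mem ht (i-1)).1
    nlinarith [goldenRatio_lt_two, goldenRatio_pos]
  have : phiDigit t i < 2 := Int.floor_lt.2 (by exact_mod_cast h2)
  omega

-- continuation: F bound
lemma Fbound {x : ℝ} (hx : x ∈ Set.Ico (0:ℝ) 1) {lam : ℕ}
    (h1 : phiDigit x lam = 0) (h2 : phiDigit x (lam + 1) = 0) :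
    ∀ d j, j + d = lam → phiMap^[j] x < 1 - φ⁻¹ ^ (d + 2) := by
  intro d
  induction d using Nat.strong_induction_on with
  | _ d ih =>
    intro j hj
    match d, ih with
    | 0, _ =>
      rw [show j = lam from by omega]
      have hfl : ⌊φ * phiMap^[lam] x⌋ = 0 := by simpa [phiDigit] using h2
      have hlt : φ * phiMap^[lam] x < 1 := ((Int.floor_eq_zero_iff).1 hfl).2
      have h1' : phiMap^[lam] x < φ⁻¹ := by
        have h := mul_lt_mul_of_pos_left hlt gi_pos
        rwa [← mul_assoc, inv_mul_cancel₀ goldenRatio_ne_zero, one_mul, mul_one] at h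
      have := gi_add_sq
      have : (φ⁻¹:ℝ) = 1 - φ⁻¹ ^ (0+2) := by ring_nf; ring_nf at this; linarith
      linarith
    | (d' + 1), ih =>
      have hjlam : j + 1 ≤ lam := by omega
      have hdig := digit_nonneg hx (j+1)
      have hdig' := digit_le_one hx (j+1)
      have hiter := iter_succ x j
      interval_cases h : phiDigit x (j+1)
      · -- digit 0 : T^[j+1] x = φ T^[j] x
        have hIH := ih d' (by omega) (j+1) (by omega)
        have hiter0 : phiMap^[j+1] x = φ * phiMap^[j] x := by
          push_cast at hiter; linarith
        have hTj : φ * phiMap^[j] x < 1 - φ⁻¹ ^ (d' + 2) := by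
          rw [← hiter0]; exact hIH
        have hp : (0:ℝ) < φ⁻¹ ^ (d' + 2) := pow_pos gi_pos _
        have key : phiMap^[j] x < φ⁻¹ * (1 - φ⁻¹ ^ (d' + 2)) := by
          have h := mul_lt_mul_of_pos_left hTj gi_pos
          rwa [← mul_assoc, inv_mul_cancel₀ goldenRatio_ne_zero, one_mul] at h
        have hstep : φ⁻¹ * (1 - φ⁻¹ ^ (d' + 2)) ≤ 1 - φ⁻¹ ^ (d' + 1 + 2) := by
          have hq : φ⁻¹ ^ (d' + 1 + 2) = φ⁻¹ * φ⁻¹ ^ (d' + 2) := by ring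
          rw [hq]; nlinarith [hp, gi_lt_one]
        linarith
      · -- digit 1
        have hne : j + 1 ≠ lam := by
          intro hEq; rw [hEq, h1] at h; exact one_ne_zero h.symm
        have hd' : 1 ≤ d' := by omega
        have hTj1 : phiMap^[j+1] x < φ⁻¹ := by
          have hxj := (iter_mem hx j).2
          rw [hiter, gi_eq]; push_cast
          have := goldenRatio_pos
          nlinarith
        have hdig2 : ⌊φ * phiMap^[j+1] x⌋ = 0 := by
          apply Int.floor_eq_zero_iff.2
          refine Set.mem_Ico.2 ⟨mul_nonneg goldenRatio_pos.le (iter_mem hx (j+1)).1, ?_⟩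
          have h := mul_lt_mul_of_pos_left hTj1 goldenRatio_pos
          rwa [gold_mul_gi] at h
        have hiter2 : phiMap^[j+2] x = φ * phiMap^[j+1] x := by
          have h3 := iter_succ x (j+1)
          have h4 : phiDigit x (j+1+1) = 0 := by simpa [phiDigit] using hdig2
          rw [h4] at h3; push_cast at h3; linarith
        have hIH := ih (d' - 1) (by omega) (j+2) (by omega)
        have hcomb : phiMap^[j+2] x = φ * (φ * phiMap^[j] x - 1) := by
          rw [hiter2, hiter]; push_cast; ring
        set a := phiMap^[j] x with ha
        set b := phiMap^[j+2] x with hb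
        have hab : φ⁻¹ ^ 2 * b = a - φ⁻¹ := by
          rw [hcomb]
          linear_combination (a * (φ * φ⁻¹ + 1) - φ⁻¹) * gold_mul_gi
        set p := φ⁻¹ ^ (d' - 1 + 2) with hp
        have hppos : (0:ℝ) < p := pow_pos gi_pos _
        have hbp : b < 1 - p := hIH
        have hmul : φ⁻¹ ^ 2 * b < φ⁻¹ ^ 2 * (1 - p) :=
          mul_lt_mul_of_pos_left hbp (pow_pos gi_pos 2)
        have hgoal : a < φ⁻¹ ^ 2 + φ⁻¹ - φ⁻¹ ^ 2 * p := by
          rw [hab] at hmul; nlinarith [hmul]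
        have hpe : φ⁻¹ ^ (d' + 1 + 2) = φ⁻¹ ^ 2 * p := by
          rw [hp, ← pow_add]; congr 1; omega
        rw [hpe]
        have := gi_add_sq
        linarith

lemma phiSum (t : ℝ) (ht : t ∈ Set.Ico (0:ℝ) 1) (n : ℕ) :
    HasSum (fun i : ℕ => (phiDigit t (i + n + 1) : ℝ) * φ⁻¹ ^ (i + n + 1))
      (φ⁻¹ ^ n * phiMap^[n] t) := by
  have hnn : ∀ i : ℕ, 0 ≤ (phiDigit t (i + n + 1) : ℝ) * φ⁻¹ ^ (i + n + 1) := fun i =>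
    mul_nonneg (by exact_mod_cast digit_nonneg ht _) (pow_nonneg gi_pos.le _)
  rw [hasSum_iff_tendsto_nat_of_nonneg hnn]
  have hps : ∀ N : ℕ, ∑ i ∈ Finset.range N, (phiDigit t (i + n + 1) : ℝ) * φ⁻¹ ^ (i + n + 1)
      = φ⁻¹ ^ n * phiMap^[n] t - φ⁻¹ ^ (n + N) * phiMap^[n + N] t := by
    intro N
    induction N with
    | zero => simp
    | succ N ih =>
      rw [Finset.sum_range_succ, ih]
      have h := iter_succ t (n + N)
      have hidx : N + n + 1 = n + N + 1 := by omega
      rw [hidx]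
      have key : φ⁻¹ ^ (n + N + 1) * phiMap^[n + N + 1] t
          = φ⁻¹ ^ (n + N) * phiMap^[n + N] t
            - (phiDigit t (n + N + 1) : ℝ) * φ⁻¹ ^ (n + N + 1) := by
        rw [h]
        linear_combination (phiMap^[n+N] t * φ⁻¹ ^ (n + N)) * (inv_mul_cancel₀ goldenRatio_ne_zero)
      rw [show n + (N + 1) = n + N + 1 from by omega, key]; ring
  apply Filter.Tendsto.congr (fun N => (hps N).symm)
  have h0 : Filter.Tendsto (fun N : ℕ => φ⁻¹ ^ (n + N) * phiMap^[n + N] t)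
      Filter.atTop (nhds 0) := by
    apply squeeze_zero (g := fun N : ℕ => φ⁻¹ ^ n * φ⁻¹ ^ N)
    · intro N
      exact mul_nonneg (pow_nonneg gi_pos.le _) (iter_mem ht _).1
    · intro N
      rw [← pow_add]
      calc φ⁻¹ ^ (n + N) * phiMap^[n + N] t ≤ φ⁻¹ ^ (n + N) * 1 := by
            apply mul_le_mul_of_nonneg_left (iter_mem ht _).2.le (pow_nonneg gi_pos.le _)
        _ = φ⁻¹ ^ (n + N) := mul_one _
    · simpa using (tendsto_pow_atTop_nhds_zero_of_lt_one gi_pos.le gi_lt_one).const_mul (φ⁻¹ ^ n)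
  simpa using tendsto_const_nhds.sub h0

lemma pow_gold_mul_gi_pow {a b : ℕ} (h : a ≤ b) : φ ^ a * φ⁻¹ ^ b = φ⁻¹ ^ (b - a) := by
  obtain ⟨c, rfl⟩ := Nat.exists_eq_add_of_le h
  rw [pow_add, ← mul_assoc, ← mul_pow, gold_mul_gi, one_pow, one_mul]
  congr 1
  omega

theorem stmt7 (x y : ℝ) (hx : x ∈ Set.Ico (0 : ℝ) 1) (hy : y ∈ Set.Ico (0 : ℝ) 1)
    (m : ℕ) (hm : 1 ≤ m)
    (lam : ℕ) (hlam : 1 ≤ lam) (hlm : lam + 2 ≤ m)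
    (h1 : phiDigit x lam = 0) (h2 : phiDigit x (lam + 1) = 0)
    (v w : ℝ)
    (hv : v = x + y * φ⁻¹ ^ m)
    (hw : w = (∑' i : ℕ, (phiDigit x (i + lam + 2) : ℝ) * φ⁻¹ ^ (i + lam + 2)) +
        ∑' i : ℕ, (phiDigit y (i + 1) : ℝ) * φ⁻¹ ^ (i + 1 + m)) :
    v ∈ Set.Ico (0 : ℝ) 1 ∧ w ∈ Set.Ico (0 : ℝ) 1 ∧ w < φ⁻¹ ^ lam ∧
      (∀ i, 1 ≤ i → i ≤ lam → phiDigit v i = phiDigit x i) ∧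
      (∀ i, lam < i → phiDigit v i = phiDigit w i) := by
  have hF := Fbound hx h1 h2
  -- the basic bound for the digit computation
  have bnd : ∀ j, j ≤ lam → 0 ≤ phiMap^[j] x + y * φ⁻¹ ^ (m - j) ∧
      phiMap^[j] x + y * φ⁻¹ ^ (m - j) < 1 := by
    intro j hjl
    constructor
    · exact add_nonneg (iter_mem hx j).1 (mul_nonneg hy.1 (pow_nonneg gi_pos.le _))
    · have hFj := hF (lam - j) j (by omega)
      have hle : y * φ⁻¹ ^ (m - j) ≤ φ⁻¹ ^ (lam - j + 2) := by
        calc y * φ⁻¹ ^ (m - j) ≤ 1 * φ⁻¹ ^ (m - j) :=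
              mul_le_mul_of_nonneg_right hy.2.le (pow_nonneg gi_pos.le _)
          _ = φ⁻¹ ^ (m - j) := one_mul _
          _ ≤ φ⁻¹ ^ (lam - j + 2) :=
              pow_le_pow_of_le_one gi_pos.le gi_lt_one.le (by omega)
      linarith
  have hsplit : ∀ j, j + 1 ≤ m → φ * (phiMap^[j] x + y * φ⁻¹ ^ (m - j)) =
      (phiDigit x (j+1) : ℝ) + (phiMap^[j+1] x + y * φ⁻¹ ^ (m - (j+1))) := by
    intro j hj
    have h := iter_succ x j
    have hpow : φ * φ⁻¹ ^ (m - j) = φ⁻¹ ^ (m - (j+1)) := by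
      rw [show m - j = (m - (j+1)) + 1 from by omega]
      linear_combination (φ⁻¹ ^ (m - (j+1))) * gold_mul_gi
    linear_combination (-1 : ℝ) * h + y * hpow
  -- the key iteration identity
  have key : ∀ k, k ≤ lam → phiMap^[k] v = phiMap^[k] x + y * φ⁻¹ ^ (m - k) := by
    intro k
    induction k with
    | zero => intro _; simpa using hv
    | succ k ih =>
      intro hk
      have e := ih (by omega)
      rw [Function.iterate_succ_apply', e]
      simp only [phiMap]
      rw [hsplit k (by omega), Int.fract_intCast_add]
      exact Int.fract_eq_self.2 ⟨(bnd (k+1) hk).1, (bnd (k+1) hk).2⟩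
  -- digits of v up to lam
  have dig_v : ∀ i, 1 ≤ i → i ≤ lam → phiDigit v i = phiDigit x i := by
    intro i hi1 hil
    obtain ⟨j, rfl⟩ : ∃ j, i = j + 1 := ⟨i - 1, by omega⟩
    have e := key j (by omega)
    have hd : phiDigit v (j+1) = ⌊φ * phiMap^[j] v⌋ := by simp [phiDigit]
    rw [hd, e, hsplit j (by omega), Int.floor_intCast_add,
      Int.floor_eq_zero_iff.2 (Set.mem_Ico.2 ⟨(bnd (j+1) hil).1, (bnd (j+1) hil).2⟩),
      add_zero]
  -- value of w
  have hws1 := phiSum x hx (lam + 1)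
  have hidx1 : ∀ i : ℕ, i + (lam + 1) + 1 = i + lam + 2 := fun i => by omega
  simp only [hidx1] at hws1
  have hws2 := (phiSum y hy 0).mul_right (φ⁻¹ ^ m)
  have hidx2 : ∀ i : ℕ, i + 0 + 1 = i + 1 := fun i => by omega
  simp only [hidx2, pow_zero, one_mul, Function.iterate_zero_apply] at hws2
  have hws2' : HasSum (fun i : ℕ => (phiDigit y (i + 1) : ℝ) * φ⁻¹ ^ (i + 1 + m))
      (y * φ⁻¹ ^ m) := by
    refine HasSum.congr_fun hws2 fun i => ?_
    rw [mul_assoc, ← pow_add]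
  have hstep : phiMap^[lam+1] x = φ * phiMap^[lam] x := by
    have h := iter_succ x lam
    rw [h2] at h; push_cast at h; linarith
  have hwval : w = φ⁻¹ ^ lam * phiMap^[lam] x + y * φ⁻¹ ^ m := by
    rw [hw, hws1.tsum_eq, hws2'.tsum_eq, hstep]
    have : φ⁻¹ ^ (lam + 1) * φ = φ⁻¹ ^ lam := by
      linear_combination (φ⁻¹ ^ lam) * (inv_mul_cancel₀ goldenRatio_ne_zero)
    linear_combination (phiMap^[lam] x) * this
  -- T^[lam] x < φ⁻¹
  have hTlam : phiMap^[lam] x < φ⁻¹ := by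
    have h := hF 0 lam (by omega)
    have h' := gi_add_sq
    rw [show (0:ℕ)+2 = 2 from rfl] at h
    linarith
  -- bounds on w
  have hw0 : 0 ≤ w := by
    rw [hwval]
    exact add_nonneg (mul_nonneg (pow_nonneg gi_pos.le _) (iter_mem hx lam).1)
      (mul_nonneg hy.1 (pow_nonneg gi_pos.le _))
  have hym : y * φ⁻¹ ^ m ≤ φ⁻¹ ^ (lam + 2) := by
    calc y * φ⁻¹ ^ m ≤ 1 * φ⁻¹ ^ m :=
          mul_le_mul_of_nonneg_right hy.2.le (pow_nonneg gi_pos.le _)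
      _ = φ⁻¹ ^ m := one_mul _
      _ ≤ φ⁻¹ ^ (lam + 2) := pow_le_pow_of_le_one gi_pos.le gi_lt_one.le hlm
  have hwlt : w < φ⁻¹ ^ lam := by
    rw [hwval]
    have e1 : φ⁻¹ ^ lam * phiMap^[lam] x < φ⁻¹ ^ lam * φ⁻¹ :=
      mul_lt_mul_of_pos_left hTlam (pow_pos gi_pos _)
    have e3 : φ⁻¹ ^ lam * φ⁻¹ + φ⁻¹ ^ (lam + 2) = φ⁻¹ ^ lam := by
      linear_combination (φ⁻¹ ^ lam) * gi_add_sq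
    linarith
  have hw1 : w < 1 := lt_of_lt_of_le hwlt (pow_le_one₀ gi_pos.le gi_lt_one.le)
  -- bounds on v
  have hv0 : 0 ≤ v := by
    rw [hv]
    exact add_nonneg hx.1 (mul_nonneg hy.1 (pow_nonneg gi_pos.le _))
  have hv1 : v < 1 := by
    have hF0 := hF lam 0 (by omega)
    simp only [Function.iterate_zero_apply] at hF0
    rw [hv]; linarith
  -- iterates of w below lam are pure powers
  have hTw : ∀ j, j ≤ lam → phiMap^[j] w = φ ^ j * w := by
    intro j
    induction j with
    | zero => intro _; simp
    | succ j ih =>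
      intro hj
      rw [Function.iterate_succ_apply', ih (by omega)]
      simp only [phiMap]
      rw [← mul_assoc, ← pow_succ']
      apply Int.fract_eq_self.2
      constructor
      · exact mul_nonneg (pow_nonneg goldenRatio_pos.le _) hw0
      · have e1 : φ ^ (j+1) * w < φ ^ (j+1) * φ⁻¹ ^ lam :=
          mul_lt_mul_of_pos_left hwlt (pow_pos goldenRatio_pos _)
        have e2 : φ ^ (j+1) * φ⁻¹ ^ lam ≤ 1 := by
          rw [pow_gold_mul_gi_pow hj]
          exact pow_le_one₀ gi_pos.le gi_lt_one.le
        linarith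
  -- the iterates at lam agree
  have hc1 : φ ^ lam * φ⁻¹ ^ lam = 1 := by rw [← mul_pow, gold_mul_gi, one_pow]
  have hc2 : φ ^ lam * φ⁻¹ ^ m = φ⁻¹ ^ (m - lam) := pow_gold_mul_gi_pow (by omega)
  have hvwlam : phiMap^[lam] v = phiMap^[lam] w := by
    rw [key lam le_rfl, hTw lam le_rfl, hwval]
    linear_combination (-(phiMap^[lam] x)) * hc1 + (-y) * hc2
  -- digits of v beyond lam
  have dig_big : ∀ i, lam < i → phiDigit v i = phiDigit w i := by
    intro i hi
    have hiter : phiMap^[i-1] v = phiMap^[i-1] w := by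
      rw [show i - 1 = (i - 1 - lam) + lam from by omega,
        Function.iterate_add_apply, Function.iterate_add_apply, hvwlam]
    simp [phiDigit, hiter]
  exact ⟨⟨hv0, hv1⟩, ⟨hw0, hw1⟩, hwlt, dig_v, dig_big⟩
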